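/- Let r ≥ 2, ℓ ≥ 3 and m ≥ 2ℓ be integers, and let F₁ = (P_ℓ ∪ K̄_m) ⊗ T(m(r−1), r−1), F₂ = mK₂ ⊗ mK₂ ⊗ T(m(r−2), r−2), F₃ = (2K_{ℓ−1} ∪ K̄_m) ⊗ (K₂ ∪ K̄_m) ⊗ T(m(r−2), r−2), and F₄ = (K_{ℓ−1} ∪ K̄_m) ⊗ (K_{ℓ−1} ∪ K̄_m) ⊗ T(m(r−2), r−2). If H is any P_ℓ-free graph and n ≥ |H|, then the graph H ⊗ T(n − |H|, r−1) is {F₁, F₂, F₃, F₄}-free; indeed, for each 1 ≤ i ≤ 4, after deleting any r−1 independent sets from F_i the remaining graph still contains a copy of P_ℓ. -/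

import Mathlib

open SimpleGraph

/-- `G` contains a (not necessarily induced) copy of `F`. -/
def ContainsCopy {V W : Type*} (F : SimpleGraph V) (G : SimpleGraph W) : Prop :=
  ∃ f : V → W, Function.Injective f ∧ ∀ ⦃a b : V⦄, F.Adj a b → G.Adj (f a) (f b)

/-- The join `G ⊗ H` of two graphs. -/
def gJoin {α β : Type*} (G : SimpleGraph α) (H : SimpleGraph β) : SimpleGraph (α ⊕ β) where
  Adj x y :=
    match x, y with
    | Sum.inl a, Sum.inl b => G.Adj a b
    | Sum.inr a, Sum.inr b => H.Adj a b
    | _, _ => True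
  symm := ⟨by rintro (a|a) (b|b) h <;> simp_all <;> exact h.symm⟩
  loopless := ⟨by rintro (a|a) h <;> simp_all⟩

/-- The disjoint union `G ∪ H` of two graphs. -/
def gUnion {α β : Type*} (G : SimpleGraph α) (H : SimpleGraph β) : SimpleGraph (α ⊕ β) where
  Adj x y :=
    match x, y with
    | Sum.inl a, Sum.inl b => G.Adj a b
    | Sum.inr a, Sum.inr b => H.Adj a b
    | _, _ => False
  symm := ⟨by rintro (a|a) (b|b) h <;> simp_all <;> exact h.symm⟩
  loopless := ⟨by rintro (a|a) h <;> simp_all⟩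

/-- The disjoint union `mH` of `m` copies of `H`. -/
def gCopies (m : ℕ) {α : Type*} (H : SimpleGraph α) : SimpleGraph (Fin m × α) where
  Adj x y := x.1 = y.1 ∧ H.Adj x.2 y.2
  symm := ⟨by rintro ⟨i, a⟩ ⟨j, b⟩ ⟨h1, h2⟩; exact ⟨h1.symm, h2.symm⟩⟩
  loopless := ⟨by rintro ⟨i, a⟩ ⟨_, h⟩; exact H.irrefl h⟩

/-- Number of edges of a graph. -/
noncomputable def edgeCount {V : Type*} (G : SimpleGraph V) : ℕ := G.edgeSet.ncard

/-- `F₁ = (P_ℓ ∪ K̄_m) ⊗ T(m(r-1), r-1)`. -/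
def F₁ (ℓ r m : ℕ) :=
  gJoin (gUnion (pathGraph ℓ) (⊥ : SimpleGraph (Fin m))) (turanGraph (m * (r - 1)) (r - 1))

/-- `F₂ = mK₂ ⊗ mK₂ ⊗ T(m(r-2), r-2)`. -/
def F₂ (r m : ℕ) :=
  gJoin (gCopies m (⊤ : SimpleGraph (Fin 2)))
    (gJoin (gCopies m (⊤ : SimpleGraph (Fin 2))) (turanGraph (m * (r - 2)) (r - 2)))

/-- `F₃ = (2K_{ℓ-1} ∪ K̄_m) ⊗ (K₂ ∪ K̄_m) ⊗ T(m(r-2), r-2)`. -/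
def F₃ (ℓ r m : ℕ) :=
  gJoin (gUnion (gCopies 2 (⊤ : SimpleGraph (Fin (ℓ - 1)))) (⊥ : SimpleGraph (Fin m)))
    (gJoin (gUnion (⊤ : SimpleGraph (Fin 2)) (⊥ : SimpleGraph (Fin m)))
      (turanGraph (m * (r - 2)) (r - 2)))

/-- `F₄ = (K_{ℓ-1} ∪ K̄_m) ⊗ (K_{ℓ-1} ∪ K̄_m) ⊗ T(m(r-2), r-2)`. -/
def F₄ (ℓ r m : ℕ) :=
  gJoin (gUnion (⊤ : SimpleGraph (Fin (ℓ - 1))) (⊥ : SimpleGraph (Fin m)))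
    (gJoin (gUnion (⊤ : SimpleGraph (Fin (ℓ - 1))) (⊥ : SimpleGraph (Fin m)))
      (turanGraph (m * (r - 2)) (r - 2)))

/-- After deleting any `k` independent sets from `F`, the remaining induced subgraph still
contains a copy of `P_ℓ`. -/
def DelIndepStillPath {α : Type*} (F : SimpleGraph α) (ℓ k : ℕ) : Prop :=
  ∀ I : Fin k → Set α, (∀ j, ∀ a ∈ I j, ∀ b ∈ I j, ¬ F.Adj a b) →
    ContainsCopy (pathGraph ℓ) (F.induce (⋃ j, I j)ᶜ)

section Shared
variable {α : Type*}

/-- A chain of `ℓ` distinct vertices in `S` with consecutive adjacency gives a copy of `P_ℓ`. -/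
lemma chain_copy (F : SimpleGraph α) (S : Set α) {ℓ : ℕ} (v : Fin ℓ → α)
    (hinj : Function.Injective v) (hS : ∀ i, v i ∈ S)
    (hadj : ∀ i j : Fin ℓ, (i : ℕ) + 1 = (j : ℕ) → F.Adj (v i) (v j)) :
    ContainsCopy (pathGraph ℓ) (F.induce S) := by
  refine ⟨fun i => ⟨v i, hS i⟩, ?_, ?_⟩
  · intro i j h
    exact hinj (congrArg Subtype.val h)
  · intro i j hij
    rw [pathGraph_adj] at hij
    have key : ∀ x y : Fin ℓ, F.Adj (v x) (v y) → (F.induce S).Adj ⟨v x, hS x⟩ ⟨v y, hS y⟩ := by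
      intro x y h; exact h
    rcases hij with h | h
    · exact key _ _ (hadj i j h)
    · exact key _ _ (hadj j i h).symm

/-- A complete bipartite pair of sizes `⌈ℓ/2⌉`, `⌊ℓ/2⌋` inside `S` gives a copy of `P_ℓ`. -/
lemma bip_copy (F : SimpleGraph α) (S : Set α) {ℓ : ℕ}
    (a : Fin ((ℓ+1)/2) → α) (b : Fin (ℓ/2) → α)
    (ha : Function.Injective a) (hb : Function.Injective b)
    (hab : ∀ i j, a i ≠ b j)
    (hadj : ∀ i j, F.Adj (a i) (b j))
    (haS : ∀ i, a i ∈ S) (hbS : ∀ i, b i ∈ S) :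
    ContainsCopy (pathGraph ℓ) (F.induce S) := by
  have hbnd1 : ∀ i : Fin ℓ, (i : ℕ) % 2 = 0 → (i : ℕ) / 2 < (ℓ+1)/2 := by
    intro i h; have := i.isLt; omega
  have hbnd2 : ∀ i : Fin ℓ, (i : ℕ) % 2 ≠ 0 → (i : ℕ) / 2 < ℓ/2 := by
    intro i h; have := i.isLt; omega
  set v : Fin ℓ → α := fun i =>
    if h : (i : ℕ) % 2 = 0 then a ⟨(i : ℕ)/2, hbnd1 i h⟩ else b ⟨(i : ℕ)/2, hbnd2 i h⟩ with hv
  apply chain_copy F S v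
  · intro i j hveq
    by_cases hi : (i : ℕ) % 2 = 0 <;> by_cases hj : (j : ℕ) % 2 = 0 <;>
      simp only [hv, dif_pos, dif_neg, hi, hj] at hveq
    · have := ha hveq; have := congrArg Fin.val this; apply Fin.ext; simp at this; omega
    · exact absurd hveq (hab _ _)
    · exact absurd hveq.symm (hab _ _)
    · have := hb hveq; have := congrArg Fin.val this; apply Fin.ext; simp at this; omega
  · intro i
    by_cases hi : (i : ℕ) % 2 = 0 <;> simp only [hv, dif_pos, dif_neg, hi]
    · exact haS _
    · exact hbS _
  · intro i j hij
    by_cases hi : (i : ℕ) % 2 = 0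
    · have hj : ¬ ((j : ℕ) % 2 = 0) := by omega
      simp only [hv, dif_pos, dif_neg, hi, hj]
      exact hadj _ _
    · have hj : (j : ℕ) % 2 = 0 := by omega
      simp only [hv, dif_pos, dif_neg, hi, hj]
      exact (hadj _ _).symm

/-- A clique of size `ℓ-1` plus a pendant vertex inside `S` gives a copy of `P_ℓ`. -/
lemma cliquep_copy (F : SimpleGraph α) (S : Set α) {ℓ : ℕ} (hℓ : 1 ≤ ℓ)
    (a : Fin (ℓ-1) → α) (b : α)
    (ha : Function.Injective a) (hab : ∀ i, a i ≠ b)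
    (hadj : ∀ i j, i ≠ j → F.Adj (a i) (a j))
    (hadjb : ∀ i, F.Adj (a i) b)
    (haS : ∀ i, a i ∈ S) (hbS : b ∈ S) :
    ContainsCopy (pathGraph ℓ) (F.induce S) := by
  set v : Fin ℓ → α := fun i => if h : (i : ℕ) < ℓ - 1 then a ⟨(i : ℕ), h⟩ else b with hv
  apply chain_copy F S v
  · intro i j hveq
    by_cases hi : (i : ℕ) < ℓ - 1 <;> by_cases hj : (j : ℕ) < ℓ - 1 <;>
      simp only [hv, dif_pos, dif_neg, hi, hj] at hveq
    · have := congrArg Fin.val (ha hveq); apply Fin.ext; simpa using this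
    · exact absurd hveq (hab _)
    · exact absurd hveq.symm (hab _)
    · apply Fin.ext; have := i.isLt; have := j.isLt; omega
  · intro i
    by_cases hi : (i : ℕ) < ℓ - 1 <;> simp only [hv, dif_pos, dif_neg, hi]
    · exact haS _
    · exact hbS
  · intro i j hij
    have hi : (i : ℕ) < ℓ - 1 := by have := j.isLt; omega
    by_cases hj : (j : ℕ) < ℓ - 1 <;> simp only [hv, dif_pos, dif_neg, hi, hj]
    · exact hadj _ _ (by intro h; have := congrArg Fin.val h; simp at this; omega)
    · exact hadjb _

/-- From a family of adjacent pairs and an independent set `J`, pick one survivor per pair. -/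
lemma pick_pairs {F : SimpleGraph α} (J : Set α) (hJ : ∀ a ∈ J, ∀ b ∈ J, ¬ F.Adj a b)
    {t : ℕ} (u w : Fin t → α) (huw : ∀ i, F.Adj (u i) (w i))
    (hu : Function.Injective u) (hw : Function.Injective w)
    (huwne : ∀ i j, u i ≠ w j) :
    ∃ z : Fin t → α, Function.Injective z ∧ (∀ i, z i ∉ J) ∧ ∀ i, z i = u i ∨ z i = w i := by
  classical
  refine ⟨fun i => if u i ∈ J then w i else u i, ?_, ?_, ?_⟩
  · intro i j h
    by_cases hi : u i ∈ J <;> by_cases hj : u j ∈ J <;> simp only [if_pos, if_neg, hi, hj] at h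
    · exact hw h
    · exact absurd h.symm (huwne _ _)
    · exact absurd h (huwne _ _)
    · exact hu h
  · intro i
    by_cases hi : u i ∈ J <;> simp only [if_pos, if_neg, hi]
    · intro hwi; exact hJ _ hi _ hwi (huw i)
    · exact hi
  · intro i
    by_cases hi : u i ∈ J
    · exact Or.inr (if_pos hi)
    · exact Or.inl (if_neg hi)

/-- From a clique indexed by `Fin (t+1)` and a set `J` meeting it in at most one point,
an injection `Fin t → Fin (t+1)` avoiding `J`. -/
lemma avoid_one {t : ℕ} (J : Set α) (u : Fin (t+1) → α)
    (hsub : ∀ i j : Fin (t+1), i ≠ j → u i ∈ J → u j ∉ J) :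
    ∃ e : Fin t → Fin (t+1), Function.Injective e ∧ ∀ i, u (e i) ∉ J := by
  classical
  by_cases h : ∃ i, u i ∈ J
  · obtain ⟨p, hp⟩ := h
    exact ⟨p.succAbove, Fin.succAbove_right_injective,
      fun i => hsub p (p.succAbove i) (Ne.symm (Fin.succAbove_ne p i)) hp⟩
  · exact ⟨Fin.castSucc, Fin.castSucc_injective _, fun i hin => h ⟨_, hin⟩⟩

/-- Injection of `Fin m` into a residue class of `Fin (m*k)`. -/
lemma classElem (m k : ℕ) (q : ℕ) (hq : q < k) :
    ∃ e : Fin m → Fin (m * k), Function.Injective e ∧ ∀ i, ((e i : ℕ)) % k = q := by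
  have hbnd : ∀ i : Fin m, q + (i : ℕ) * k < m * k := by
    intro i
    have h1 : (i : ℕ) + 1 ≤ m := i.isLt
    calc q + (i : ℕ) * k < k + (i : ℕ) * k := by omega
    _ = ((i : ℕ) + 1) * k := by ring
    _ ≤ m * k := Nat.mul_le_mul_right _ h1
  refine ⟨fun i => ⟨q + (i : ℕ) * k, hbnd i⟩, ?_, ?_⟩
  · intro i j h
    have h2 := congrArg Fin.val h
    simp only at h2
    apply Fin.ext
    have : (i : ℕ) * k = (j : ℕ) * k := by omega
    exact Nat.eq_of_mul_eq_mul_right (by omega) this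
  · intro i
    simp [Nat.add_mul_mod_self_right, Nat.mod_eq_of_lt hq]

end Shared


section PA
variable {α : Type*}

lemma parts_analysis {F : SimpleGraph α} {r k : ℕ} (hkr : k < r) (π : α → ℕ)
    (hπr : ∀ a, π a < r)
    (hcross : ∀ a b, π a ≠ π b → F.Adj a b)
    (I : Fin k → Set α) (hI : ∀ j, ∀ a ∈ I j, ∀ b ∈ I j, ¬ F.Adj a b) :
    (∃ p q : ℕ, p < r ∧ q < r ∧ p ≠ q ∧ (∀ j, ∀ a ∈ I j, π a ≠ p) ∧
      (∀ j, ∀ a ∈ I j, π a ≠ q)) ∨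
    ((∃ p : ℕ, p < r ∧ ∀ j, ∀ a ∈ I j, π a ≠ p) ∧
      ∀ q : ℕ, ∃ J : Set α, (∀ a ∈ J, ∀ b ∈ J, ¬ F.Adj a b) ∧
        (∀ j, ∀ a ∈ I j, π a = q → a ∈ J)) := by
  classical
  have mono : ∀ j, ∀ a ∈ I j, ∀ b ∈ I j, π a = π b := by
    intro j a ha b hb
    by_contra h
    exact hI j a ha b hb (hcross a b h)
  set c : Fin k → ℕ := fun j => if h : ∃ a, a ∈ I j then π h.choose else 0 with hc
  have hcval : ∀ j, ∀ a ∈ I j, c j = π a := by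
    intro j a ha
    have h : ∃ a, a ∈ I j := ⟨a, ha⟩
    simp only [hc, dif_pos h]
    exact mono j _ h.choose_spec a ha
  set HIT : Finset ℕ := (Finset.range r).filter (fun p => ∃ j, ∃ a ∈ I j, π a = p) with hHIT
  have hunhit : ∀ p : ℕ, p < r → p ∉ HIT → ∀ j, ∀ a ∈ I j, π a ≠ p := by
    intro p hpr hp j a ha hpa
    exact hp (Finset.mem_filter.mpr ⟨Finset.mem_range.mpr hpr, j, a, ha, hpa⟩)
  set MISS : Finset ℕ := (Finset.range r).filter (fun p => p ∉ HIT) with hMISS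
  have hcards : MISS.card + HIT.card = r := by
    have h1 : HIT = (Finset.range r).filter (fun p => p ∈ HIT) := by
      apply Finset.ext
      intro p
      simp only [Finset.mem_filter, hHIT, Finset.mem_range]
      tauto
    have h2 := Finset.card_filter_add_card_filter_not
      (s := Finset.range r) (p := fun p => p ∈ HIT)
    rw [Finset.card_range] at h2
    have h3 : HIT.card = ((Finset.range r).filter (fun p => p ∈ HIT)).card := by rw [← h1]
    have h4 : MISS.card = ((Finset.range r).filter (fun p => ¬ p ∈ HIT)).card := by rw [hMISS]
    omega
  by_cases hdup : ∃ j₁ j₂ : Fin k, j₁ ≠ j₂ ∧ ∃ a₁ ∈ I j₁, ∃ a₂ ∈ I j₂, π a₁ = π a₂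
  · left
    obtain ⟨j₁, j₂, hne, a₁, ha₁, a₂, ha₂, hπ⟩ := hdup
    have hsub : HIT ⊆ Finset.image c (Finset.univ.erase j₂) := by
      intro p hp
      simp only [hHIT, Finset.mem_filter] at hp
      obtain ⟨-, j, a, ha, hpa⟩ := hp
      by_cases hj : j = j₂
      · subst hj
        refine Finset.mem_image.mpr ⟨j₁, Finset.mem_erase.mpr ⟨hne, Finset.mem_univ _⟩, ?_⟩
        rw [hcval j₁ a₁ ha₁, hπ, mono j a₂ ha₂ a ha, hpa]
      · exact Finset.mem_image.mpr ⟨j, Finset.mem_erase.mpr ⟨hj, Finset.mem_univ _⟩,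
          (hcval j a ha).trans hpa⟩
    have hcard : HIT.card ≤ k - 1 := by
      refine le_trans (Finset.card_le_card hsub) (le_trans Finset.card_image_le ?_)
      rw [Finset.card_erase_of_mem (Finset.mem_univ _)]
      simp
    obtain ⟨p, hp, q, hq, hpq⟩ := Finset.one_lt_card.mp (show 1 < MISS.card by omega)
    rw [hMISS, Finset.mem_filter, Finset.mem_range] at hp hq
    exact ⟨p, q, hp.1, hq.1, hpq, hunhit p hp.1 hp.2, hunhit q hq.1 hq.2⟩
  · right
    constructor
    · have hsub2 : HIT ⊆ Finset.image c Finset.univ := by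
        intro p hp
        simp only [hHIT, Finset.mem_filter] at hp
        obtain ⟨-, j, a, ha, hpa⟩ := hp
        exact Finset.mem_image.mpr ⟨j, Finset.mem_univ _, (hcval j a ha).trans hpa⟩
      have hcard : HIT.card ≤ k := le_trans (Finset.card_le_card hsub2)
        (le_trans Finset.card_image_le (by simp [Finset.card_univ]))
      obtain ⟨p, hp⟩ := Finset.card_pos.mp (show 0 < MISS.card by omega)
      rw [hMISS, Finset.mem_filter, Finset.mem_range] at hp
      exact ⟨p, hp.1, hunhit p hp.1 hp.2⟩
    · intro q
      by_cases hq : ∃ j, ∃ a ∈ I j, π a = q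
      · obtain ⟨j, a, ha, hpa⟩ := hq
        refine ⟨I j, hI j, ?_⟩
        intro j' a' ha' hq'
        by_cases hjj : j' = j
        · subst hjj; exact ha'
        · exact absurd ⟨j', j, hjj, a', ha', a, ha, by rw [hq', hpa]⟩ hdup
      · exact ⟨∅, by simp, fun j a ha hqa => absurd ⟨j, a, ha, hqa⟩ hq⟩

end PA


lemma free_of_del {V : Type*} (F : SimpleGraph V) {ℓ k : ℕ} (hk : 1 ≤ k)
    (hDel : DelIndepStillPath F ℓ k) {α : Type*} (H : SimpleGraph α)
    (hH : ¬ ContainsCopy (pathGraph ℓ) H) (N : ℕ) :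
    ¬ ContainsCopy F (gJoin H (turanGraph N k)) := by
  rintro ⟨f, hfinj, hfadj⟩
  set I : Fin k → Set V := fun j => {a | ∃ v : Fin N, f a = Sum.inr v ∧ (v : ℕ) % k = (j : ℕ)}
    with hIdef
  have hind : ∀ j, ∀ a ∈ I j, ∀ b ∈ I j, ¬ F.Adj a b := by
    rintro j a ⟨v, hfa, hv⟩ b ⟨w, hfb, hw⟩ hadj
    have h1 := hfadj hadj
    rw [hfa, hfb] at h1
    have h2 : (v : ℕ) % k ≠ (w : ℕ) % k := h1
    omega
  obtain ⟨g, hginj, hgadj⟩ := hDel I hind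
  have hinl : ∀ i : Fin ℓ, ∃ h : α, f (g i : V) = Sum.inl h := by
    intro i
    rcases hfg : f (g i : V) with h | v
    · exact ⟨h, rfl⟩
    · exfalso
      apply (g i).2
      exact Set.mem_iUnion.mpr ⟨⟨(v : ℕ) % k, Nat.mod_lt _ (by omega)⟩, ⟨v, hfg, rfl⟩⟩
  choose φ hφ using hinl
  apply hH
  refine ⟨φ, ?_, ?_⟩
  · intro i j h
    apply hginj
    apply Subtype.ext
    apply hfinj
    rw [hφ i, hφ j, h]
  · intro a b hab
    have h2 : F.Adj (g a : V) (g b : V) := hgadj hab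
    have h3 := hfadj h2
    rw [hφ a, hφ b] at h3
    exact h3
lemma del₁ (ℓ r m : ℕ) (hr : 2 ≤ r) (hℓ : 3 ≤ ℓ) (hm : 2 * ℓ ≤ m) :
    DelIndepStillPath (F₁ ℓ r m) ℓ (r - 1) := by
  classical
  intro I hI
  have hr1 : 0 < r - 1 := by omega
  set π : (Fin ℓ ⊕ Fin m) ⊕ Fin (m * (r - 1)) → ℕ := fun x =>
    match x with
    | Sum.inl _ => 0
    | Sum.inr v => (v : ℕ) % (r - 1) + 1 with hπ
  have hπr : ∀ a, π a < r := by
    rintro (x | v)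
    · simp only [hπ]; omega
    · simp only [hπ]
      have := Nat.mod_lt (v : ℕ) hr1
      omega
  have hcross : ∀ a b, π a ≠ π b → (F₁ ℓ r m).Adj a b := by
    rintro (x | v) (y | w) h
    · exact absurd rfl h
    · exact trivial
    · exact trivial
    · exact fun hvw => h (by simp only [hπ, hvw])
  have hfull : ∀ p : ℕ, p < r → ∃ e : Fin m → (Fin ℓ ⊕ Fin m) ⊕ Fin (m * (r - 1)),
      Function.Injective e ∧ ∀ i, π (e i) = p := by
    intro p hp
    rcases Nat.eq_zero_or_pos p with hp0 | hp0
    · subst hp0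
      refine ⟨fun i => Sum.inl (Sum.inr i), ?_, fun i => rfl⟩
      intro i j hij
      simpa using hij
    · obtain ⟨e', he', he'q⟩ := classElem m (r - 1) (p - 1) (by omega)
      refine ⟨fun i => Sum.inr (e' i), ?_, ?_⟩
      · intro i j hij; exact he' (by simpa using hij)
      · intro i; simp only [hπ, he'q i]; omega
  have hmemS : ∀ (p : ℕ), (∀ j, ∀ a ∈ I j, π a ≠ p) →
      ∀ x, π x = p → x ∈ (⋃ j, I j)ᶜ := by
    intro p hp x hxp hxmem
    obtain ⟨j, hj⟩ := Set.mem_iUnion.mp hxmem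
    exact hp j x hj hxp
  rcases parts_analysis (show r - 1 < r by omega) π hπr hcross I hI with
    ⟨p, q, hpr, hqr, hpq, hp, hq⟩ | ⟨⟨p, hpr, hp⟩, hcov⟩
  · obtain ⟨ep, hep, hepπ⟩ := hfull p hpr
    obtain ⟨eq', heq, heqπ⟩ := hfull q hqr
    apply bip_copy (F₁ ℓ r m) _
      (fun i => ep (Fin.castLE (by omega) i))
      (fun i => eq' (Fin.castLE (by omega) i))
    · exact hep.comp (Fin.castLE_injective _)
    · exact heq.comp (Fin.castLE_injective _)
    · intro i j h
      exact hpq ((hepπ _).symm.trans ((congrArg π h).trans (heqπ _)))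
    · intro i j
      exact hcross _ _ (by rw [hepπ, heqπ]; exact hpq)
    · intro i; exact hmemS p hp _ (hepπ _)
    · intro i; exact hmemS q hq _ (heqπ _)
  · rcases Nat.eq_zero_or_pos p with hp0 | hp0
    · subst hp0
      apply chain_copy (F₁ ℓ r m) _ (fun i : Fin ℓ => Sum.inl (Sum.inl i))
      · intro i j h; simpa using h
      · intro i; exact hmemS 0 hp _ rfl
      · intro i j hij
        exact pathGraph_adj.mpr (Or.inl hij)
    · obtain ⟨J, hJind, hJcov⟩ := hcov 0
      obtain ⟨ep, hep, hepπ⟩ := hfull p hpr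
      obtain ⟨z, hzinj, hzJ, hzor⟩ := pick_pairs (F := F₁ ℓ r m) J hJind
        (fun i : Fin (ℓ / 2) => Sum.inl (Sum.inl ⟨2 * (i : ℕ), by have := i.isLt; omega⟩))
        (fun i : Fin (ℓ / 2) => Sum.inl (Sum.inl ⟨2 * (i : ℕ) + 1, by have := i.isLt; omega⟩))
        (fun i => pathGraph_adj.mpr (Or.inl rfl))
        (by intro i j h; simp only [Sum.inl.injEq, Fin.mk.injEq] at h; exact Fin.ext (by omega))
        (by intro i j h; simp only [Sum.inl.injEq, Fin.mk.injEq] at h; exact Fin.ext (by omega))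
        (by intro i j h; simp only [Sum.inl.injEq, Fin.mk.injEq] at h; omega)
      have hzπ : ∀ i, π (z i) = 0 := by
        intro i; rcases hzor i with h | h <;> rw [h] <;> rfl
      have hzS : ∀ i, z i ∈ (⋃ j, I j)ᶜ := by
        intro i hmem
        obtain ⟨j, hj⟩ := Set.mem_iUnion.mp hmem
        exact hzJ i (hJcov j _ hj (hzπ i))
      apply bip_copy (F₁ ℓ r m) _ (fun i => ep (Fin.castLE (by omega) i)) z
      · exact hep.comp (Fin.castLE_injective _)
      · exact hzinj
      · intro i j h
        have h2 := hzπ j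
        rw [← h, hepπ] at h2
        omega
      · intro i j
        exact hcross _ _ (by rw [hepπ, hzπ]; omega)
      · intro i; exact hmemS p hp _ (hepπ _)
      · exact hzS

lemma bip_parts {α : Type*} (F : SimpleGraph α) {ℓ k : ℕ} (I : Fin k → Set α)
    (π : α → ℕ) (hcross : ∀ a b, π a ≠ π b → F.Adj a b)
    {p q : ℕ} (hpq : p ≠ q)
    (a : Fin ((ℓ+1)/2) → α) (b : Fin (ℓ/2) → α)
    (ha : Function.Injective a) (hb : Function.Injective b)
    (haπ : ∀ i, π (a i) = p) (hbπ : ∀ i, π (b i) = q)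
    (haS : ∀ i, a i ∈ (⋃ j, I j)ᶜ) (hbS : ∀ i, b i ∈ (⋃ j, I j)ᶜ) :
    ContainsCopy (pathGraph ℓ) (F.induce (⋃ j, I j)ᶜ) := by
  apply bip_copy F _ a b ha hb
  · intro i j h; exact hpq ((haπ i).symm.trans ((congrArg π h).trans (hbπ j)))
  · intro i j; exact hcross _ _ (by rw [haπ, hbπ]; exact hpq)
  · exact haS
  · exact hbS

lemma del₂ (ℓ r m : ℕ) (hr : 2 ≤ r) (hℓ : 3 ≤ ℓ) (hm : 2 * ℓ ≤ m) :
    DelIndepStillPath (F₂ r m) ℓ (r - 1) := by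
  classical
  intro I hI
  set π : (Fin m × Fin 2) ⊕ ((Fin m × Fin 2) ⊕ Fin (m * (r - 2))) → ℕ := fun x =>
    match x with
    | Sum.inl _ => 0
    | Sum.inr (Sum.inl _) => 1
    | Sum.inr (Sum.inr v) => (v : ℕ) % (r - 2) + 2 with hπ
  have hπr : ∀ a, π a < r := by
    rintro (x | (y | v))
    · simp only [hπ]; omega
    · simp only [hπ]; omega
    · simp only [hπ]
      have hv := v.isLt
      have h2 : 0 < r - 2 := by
        by_contra hcon
        have h0 : r - 2 = 0 := by omega
        have hz : m * (r - 2) = 0 := by rw [h0]; exact Nat.mul_zero m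
        exact Fin.elim0 (Fin.cast hz v)
      have := Nat.mod_lt (v : ℕ) h2
      omega
  have hcross : ∀ a b, π a ≠ π b → (F₂ r m).Adj a b := by
    rintro (x | (y | v)) (x' | (y' | w)) h
    · exact absurd rfl h
    · exact trivial
    · exact trivial
    · exact trivial
    · exact absurd rfl h
    · exact trivial
    · exact trivial
    · exact trivial
    · exact fun hvw => h (by simp only [hπ, hvw])
  have hmemS : ∀ (p : ℕ), (∀ j, ∀ a ∈ I j, π a ≠ p) →
      ∀ x, π x = p → x ∈ (⋃ j, I j)ᶜ := by
    intro p hp x hxp hxmem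
    obtain ⟨j, hj⟩ := Set.mem_iUnion.mp hxmem
    exact hp j x hj hxp
  have hfull : ∀ p : ℕ, p < r → ∃ e : Fin m → (Fin m × Fin 2) ⊕ ((Fin m × Fin 2) ⊕ Fin (m * (r - 2))),
      Function.Injective e ∧ ∀ i, π (e i) = p := by
    intro p hp
    match p, hp with
    | 0, _ =>
      refine ⟨fun i => Sum.inl (i, 0), ?_, fun i => rfl⟩
      intro i j hij; simpa using (congrArg (fun x => x) hij)
    | 1, _ =>
      refine ⟨fun i => Sum.inr (Sum.inl (i, 0)), ?_, fun i => rfl⟩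
      intro i j hij; simpa using hij
    | (p+2), hp =>
      obtain ⟨e', he', he'q⟩ := classElem m (r - 2) p (by omega)
      refine ⟨fun i => Sum.inr (Sum.inr (e' i)), ?_, ?_⟩
      · intro i j hij; exact he' (by simpa using hij)
      · intro i; simp only [hπ, he'q i]
  have hm1 : (ℓ + 1) / 2 ≤ m := by omega
  have hm2 : ℓ / 2 ≤ m := by omega
  rcases parts_analysis (show r - 1 < r by omega) π hπr hcross I hI with
    ⟨p, q, hpr, hqr, hpq, hp, hq⟩ | ⟨⟨p, hpr, hp⟩, hcov⟩
  · obtain ⟨ep, hep, hepπ⟩ := hfull p hpr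
    obtain ⟨eq', heq, heqπ⟩ := hfull q hqr
    apply bip_parts (F₂ r m) I π hcross hpq
      (fun i => ep (Fin.castLE hm1 i)) (fun i => eq' (Fin.castLE hm2 i))
      (hep.comp (Fin.castLE_injective _)) (heq.comp (Fin.castLE_injective _))
      (fun i => hepπ _) (fun i => heqπ _)
      (fun i => hmemS p hp _ (hepπ _)) (fun i => hmemS q hq _ (heqπ _))
  · obtain ⟨J₀, hJ₀ind, hJ₀cov⟩ := hcov 0
    obtain ⟨J₁, hJ₁ind, hJ₁cov⟩ := hcov 1
    obtain ⟨z₀, hz₀inj, hz₀J, hz₀or⟩ := pick_pairs (F := F₂ r m) J₀ hJ₀ind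
      (fun i : Fin m => Sum.inl (i, 0)) (fun i : Fin m => Sum.inl (i, 1))
      (fun i => (⟨rfl, (by decide : (0 : Fin 2) ≠ 1)⟩ : (F₂ r m).Adj (Sum.inl (i, 0)) (Sum.inl (i, 1))))
      (by intro i j h; simpa using h)
      (by intro i j h; simpa using h)
      (by intro i j h; simp at h)
    obtain ⟨z₁, hz₁inj, hz₁J, hz₁or⟩ := pick_pairs (F := F₂ r m) J₁ hJ₁ind
      (fun i : Fin m => Sum.inr (Sum.inl (i, 0))) (fun i : Fin m => Sum.inr (Sum.inl (i, 1)))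
      (fun i => (⟨rfl, (by decide : (0 : Fin 2) ≠ 1)⟩ :
        (F₂ r m).Adj (Sum.inr (Sum.inl (i, 0))) (Sum.inr (Sum.inl (i, 1)))))
      (by intro i j h; simpa using h)
      (by intro i j h; simpa using h)
      (by intro i j h; simp at h)
    have hz₀π : ∀ i, π (z₀ i) = 0 := by
      intro i; rcases hz₀or i with h | h <;> rw [h] <;> rfl
    have hz₁π : ∀ i, π (z₁ i) = 1 := by
      intro i; rcases hz₁or i with h | h <;> rw [h] <;> rfl
    have hz₀S : ∀ i, z₀ i ∈ (⋃ j, I j)ᶜ := by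
      intro i hmem
      obtain ⟨j, hj⟩ := Set.mem_iUnion.mp hmem
      exact hz₀J i (hJ₀cov j _ hj (hz₀π i))
    have hz₁S : ∀ i, z₁ i ∈ (⋃ j, I j)ᶜ := by
      intro i hmem
      obtain ⟨j, hj⟩ := Set.mem_iUnion.mp hmem
      exact hz₁J i (hJ₁cov j _ hj (hz₁π i))
    apply bip_parts (F₂ r m) I π hcross (show (0:ℕ) ≠ 1 by omega)
      (fun i => z₀ (Fin.castLE hm1 i)) (fun i => z₁ (Fin.castLE hm2 i))
      (hz₀inj.comp (Fin.castLE_injective _)) (hz₁inj.comp (Fin.castLE_injective _))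
      (fun i => hz₀π _) (fun i => hz₁π _)
      (fun i => hz₀S _) (fun i => hz₁S _)

lemma del₃ (ℓ r m : ℕ) (hr : 2 ≤ r) (hℓ : 3 ≤ ℓ) (hm : 2 * ℓ ≤ m) :
    DelIndepStillPath (F₃ ℓ r m) ℓ (r - 1) := by
  classical
  intro I hI
  set π : ((Fin 2 × Fin (ℓ - 1)) ⊕ Fin m) ⊕ ((Fin 2 ⊕ Fin m) ⊕ Fin (m * (r - 2))) → ℕ := fun x =>
    match x with
    | Sum.inl _ => 0
    | Sum.inr (Sum.inl _) => 1
    | Sum.inr (Sum.inr v) => (v : ℕ) % (r - 2) + 2 with hπ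
  have hπr : ∀ a, π a < r := by
    rintro (x | (y | v))
    · simp only [hπ]; omega
    · simp only [hπ]; omega
    · simp only [hπ]
      have hv := v.isLt
      have h2 : 0 < r - 2 := by
        by_contra hcon
        have h0 : r - 2 = 0 := by omega
        have hz : m * (r - 2) = 0 := by rw [h0]; exact Nat.mul_zero m
        exact Fin.elim0 (Fin.cast hz v)
      have := Nat.mod_lt (v : ℕ) h2
      omega
  have hcross : ∀ a b, π a ≠ π b → (F₃ ℓ r m).Adj a b := by
    rintro (x | (y | v)) (x' | (y' | w)) h
    · exact absurd rfl h
    · exact trivial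
    · exact trivial
    · exact trivial
    · exact absurd rfl h
    · exact trivial
    · exact trivial
    · exact trivial
    · exact fun hvw => h (by simp only [hπ, hvw])
  have hmemS : ∀ (p : ℕ), (∀ j, ∀ a ∈ I j, π a ≠ p) →
      ∀ x, π x = p → x ∈ (⋃ j, I j)ᶜ := by
    intro p hp x hxp hxmem
    obtain ⟨j, hj⟩ := Set.mem_iUnion.mp hxmem
    exact hp j x hj hxp
  have hfull : ∀ p : ℕ, p < r →
      ∃ e : Fin m → ((Fin 2 × Fin (ℓ - 1)) ⊕ Fin m) ⊕ ((Fin 2 ⊕ Fin m) ⊕ Fin (m * (r - 2))),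
      Function.Injective e ∧ ∀ i, π (e i) = p := by
    intro p hp
    match p, hp with
    | 0, _ =>
      refine ⟨fun i => Sum.inl (Sum.inr i), ?_, fun i => rfl⟩
      intro i j hij; simpa using hij
    | 1, _ =>
      refine ⟨fun i => Sum.inr (Sum.inl (Sum.inr i)), ?_, fun i => rfl⟩
      intro i j hij; simpa using hij
    | (p+2), hp =>
      obtain ⟨e', he', he'q⟩ := classElem m (r - 2) p (by omega)
      refine ⟨fun i => Sum.inr (Sum.inr (e' i)), ?_, ?_⟩
      · intro i j hij; exact he' (by simpa using hij)
      · intro i; simp only [hπ, he'q i]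
  have hm1 : (ℓ + 1) / 2 ≤ m := by omega
  have hm2 : ℓ / 2 ≤ m := by omega
  rcases parts_analysis (show r - 1 < r by omega) π hπr hcross I hI with
    ⟨p, q, hpr, hqr, hpq, hp, hq⟩ | ⟨⟨p, hpr, hp⟩, hcov⟩
  · obtain ⟨ep, hep, hepπ⟩ := hfull p hpr
    obtain ⟨eq', heq, heqπ⟩ := hfull q hqr
    exact bip_parts (F₃ ℓ r m) I π hcross hpq
      (fun i => ep (Fin.castLE hm1 i)) (fun i => eq' (Fin.castLE hm2 i))
      (hep.comp (Fin.castLE_injective _)) (heq.comp (Fin.castLE_injective _))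
      (fun i => hepπ _) (fun i => heqπ _)
      (fun i => hmemS p hp _ (hepπ _)) (fun i => hmemS q hq _ (heqπ _))
  · rcases Nat.eq_zero_or_pos p with hp0 | hp0
    · -- p = 0 unhit : clique of A intact, pendant in B
      subst hp0
      obtain ⟨J₁, hJ₁ind, hJ₁cov⟩ := hcov 1
      obtain ⟨z, hzinj, hzJ, hzor⟩ := pick_pairs (F := F₃ ℓ r m) J₁ hJ₁ind
        (fun _ : Fin 1 => Sum.inr (Sum.inl (Sum.inl 0)))
        (fun _ : Fin 1 => Sum.inr (Sum.inl (Sum.inl 1)))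
        (fun _ => ((by decide : (0 : Fin 2) ≠ 1) :
          (F₃ ℓ r m).Adj (Sum.inr (Sum.inl (Sum.inl 0))) (Sum.inr (Sum.inl (Sum.inl 1)))))
        (fun i j _ => Subsingleton.elim i j)
        (fun i j _ => Subsingleton.elim i j)
        (by intro i j h
            simp only [Sum.inr.injEq, Sum.inl.injEq] at h
            exact absurd h (by decide))
      set b := z 0 with hb
      have hbπ : π b = 1 := by rcases hzor 0 with h | h <;> rw [hb, h] <;> rfl
      have hbS : b ∈ (⋃ j, I j)ᶜ := by
        intro hmem
        obtain ⟨j, hj⟩ := Set.mem_iUnion.mp hmem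
        exact hzJ 0 (hJ₁cov j _ hj hbπ)
      apply cliquep_copy (F₃ ℓ r m) _ (show 1 ≤ ℓ by omega)
        (fun i : Fin (ℓ - 1) => Sum.inl (Sum.inl (0, i))) b
      · intro i j h
        simp only [Sum.inl.injEq, Prod.mk.injEq] at h
        exact h.2
      · intro i h
        have h2 := congrArg π h
        rw [hbπ] at h2
        have h0 : π (Sum.inl (Sum.inl ((0 : Fin 2), i))) = 0 := rfl
        omega
      · intro i j hij
        exact (⟨rfl, fun hc => hij hc⟩ :
          (F₃ ℓ r m).Adj (Sum.inl (Sum.inl (0, i))) (Sum.inl (Sum.inl (0, j))))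
      · intro i
        apply hcross
        rw [hbπ]
        exact Nat.zero_ne_one
      · intro i; exact hmemS 0 hp _ rfl
      · exact hbS
    · -- p ≠ 0 unhit : full part p versus clique survivors in A
      obtain ⟨J₀, hJ₀ind, hJ₀cov⟩ := hcov 0
      obtain ⟨ep, hep, hepπ⟩ := hfull p hpr
      have hcast : ℓ - 2 + 1 = ℓ - 1 := by omega
      set u : Fin (ℓ - 2 + 1) → ((Fin 2 × Fin (ℓ - 1)) ⊕ Fin m) ⊕ ((Fin 2 ⊕ Fin m) ⊕ Fin (m * (r - 2))) :=
        fun i => Sum.inl (Sum.inl (0, Fin.cast hcast i)) with hu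
      have huinj : Function.Injective u := by
        intro x y h
        simp only [hu, Sum.inl.injEq, Prod.mk.injEq] at h
        exact Fin.cast_injective hcast h.2
      obtain ⟨e, heinj, heJ⟩ := avoid_one J₀ u (by
        intro i j hij hi hj
        exact hJ₀ind _ hi _ hj (⟨rfl, fun hc => hij (Fin.cast_injective hcast hc)⟩ :
          (F₃ ℓ r m).Adj (u i) (u j)))
      have hle : ℓ / 2 ≤ ℓ - 2 := by omega
      refine bip_parts (F₃ ℓ r m) I π hcross (show p ≠ 0 by omega)
        (fun i => ep (Fin.castLE hm1 i)) (fun i => u (e (Fin.castLE hle i)))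
        (hep.comp (Fin.castLE_injective _))
        (huinj.comp (heinj.comp (Fin.castLE_injective _)))
        (fun i => hepπ _) (fun i => rfl)
        (fun i => hmemS p hp _ (hepπ _)) ?_
      intro i hmem
      obtain ⟨j, hj⟩ := Set.mem_iUnion.mp hmem
      exact heJ _ (hJ₀cov j _ hj rfl)

lemma del₄ (ℓ r m : ℕ) (hr : 2 ≤ r) (hℓ : 3 ≤ ℓ) (hm : 2 * ℓ ≤ m) :
    DelIndepStillPath (F₄ ℓ r m) ℓ (r - 1) := by
  classical
  intro I hI
  have h01 : 0 < ℓ - 1 := by omega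
  have h11 : 1 < ℓ - 1 := by omega
  set π : (Fin (ℓ - 1) ⊕ Fin m) ⊕ ((Fin (ℓ - 1) ⊕ Fin m) ⊕ Fin (m * (r - 2))) → ℕ := fun x =>
    match x with
    | Sum.inl _ => 0
    | Sum.inr (Sum.inl _) => 1
    | Sum.inr (Sum.inr v) => (v : ℕ) % (r - 2) + 2 with hπ
  have hπr : ∀ a, π a < r := by
    rintro (x | (y | v))
    · simp only [hπ]; omega
    · simp only [hπ]; omega
    · simp only [hπ]
      have hv := v.isLt
      have h2 : 0 < r - 2 := by
        by_contra hcon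
        have h0 : r - 2 = 0 := by omega
        have hz : m * (r - 2) = 0 := by rw [h0]; exact Nat.mul_zero m
        exact Fin.elim0 (Fin.cast hz v)
      have := Nat.mod_lt (v : ℕ) h2
      omega
  have hcross : ∀ a b, π a ≠ π b → (F₄ ℓ r m).Adj a b := by
    rintro (x | (y | v)) (x' | (y' | w)) h
    · exact absurd rfl h
    · exact trivial
    · exact trivial
    · exact trivial
    · exact absurd rfl h
    · exact trivial
    · exact trivial
    · exact trivial
    · exact fun hvw => h (by simp only [hπ, hvw])
  have hmemS : ∀ (p : ℕ), (∀ j, ∀ a ∈ I j, π a ≠ p) →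
      ∀ x, π x = p → x ∈ (⋃ j, I j)ᶜ := by
    intro p hp x hxp hxmem
    obtain ⟨j, hj⟩ := Set.mem_iUnion.mp hxmem
    exact hp j x hj hxp
  have hfull : ∀ p : ℕ, p < r →
      ∃ e : Fin m → (Fin (ℓ - 1) ⊕ Fin m) ⊕ ((Fin (ℓ - 1) ⊕ Fin m) ⊕ Fin (m * (r - 2))),
      Function.Injective e ∧ ∀ i, π (e i) = p := by
    intro p hp
    match p, hp with
    | 0, _ =>
      refine ⟨fun i => Sum.inl (Sum.inr i), ?_, fun i => rfl⟩
      intro i j hij; simpa using hij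
    | 1, _ =>
      refine ⟨fun i => Sum.inr (Sum.inl (Sum.inr i)), ?_, fun i => rfl⟩
      intro i j hij; simpa using hij
    | (p+2), hp =>
      obtain ⟨e', he', he'q⟩ := classElem m (r - 2) p (by omega)
      refine ⟨fun i => Sum.inr (Sum.inr (e' i)), ?_, ?_⟩
      · intro i j hij; exact he' (by simpa using hij)
      · intro i; simp only [hπ, he'q i]
  have hm1 : (ℓ + 1) / 2 ≤ m := by omega
  have hm2 : ℓ / 2 ≤ m := by omega
  rcases parts_analysis (show r - 1 < r by omega) π hπr hcross I hI with
    ⟨p, q, hpr, hqr, hpq, hp, hq⟩ | ⟨⟨p, hpr, hp⟩, hcov⟩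
  · obtain ⟨ep, hep, hepπ⟩ := hfull p hpr
    obtain ⟨eq', heq, heqπ⟩ := hfull q hqr
    exact bip_parts (F₄ ℓ r m) I π hcross hpq
      (fun i => ep (Fin.castLE hm1 i)) (fun i => eq' (Fin.castLE hm2 i))
      (hep.comp (Fin.castLE_injective _)) (heq.comp (Fin.castLE_injective _))
      (fun i => hepπ _) (fun i => heqπ _)
      (fun i => hmemS p hp _ (hepπ _)) (fun i => hmemS q hq _ (heqπ _))
  · rcases Nat.eq_zero_or_pos p with hp0 | hp0
    · subst hp0
      obtain ⟨J₁, hJ₁ind, hJ₁cov⟩ := hcov 1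
      obtain ⟨z, hzinj, hzJ, hzor⟩ := pick_pairs (F := F₄ ℓ r m) J₁ hJ₁ind
        (fun _ : Fin 1 => Sum.inr (Sum.inl (Sum.inl ⟨0, h01⟩)))
        (fun _ : Fin 1 => Sum.inr (Sum.inl (Sum.inl ⟨1, h11⟩)))
        (fun _ => ((by
            intro hc
            simp only [Fin.mk.injEq] at hc
            omega) :
          (F₄ ℓ r m).Adj (Sum.inr (Sum.inl (Sum.inl ⟨0, h01⟩)))
            (Sum.inr (Sum.inl (Sum.inl ⟨1, h11⟩)))))
        (fun i j _ => Subsingleton.elim i j)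
        (fun i j _ => Subsingleton.elim i j)
        (by intro i j h
            simp only [Sum.inr.injEq, Sum.inl.injEq, Fin.mk.injEq] at h
            omega)
      set b := z 0 with hb
      have hbπ : π b = 1 := by rcases hzor 0 with h | h <;> rw [hb, h] <;> rfl
      have hbS : b ∈ (⋃ j, I j)ᶜ := by
        intro hmem
        obtain ⟨j, hj⟩ := Set.mem_iUnion.mp hmem
        exact hzJ 0 (hJ₁cov j _ hj hbπ)
      apply cliquep_copy (F₄ ℓ r m) _ (show 1 ≤ ℓ by omega)
        (fun i : Fin (ℓ - 1) => Sum.inl (Sum.inl i)) b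
      · intro i j h
        simpa using h
      · intro i h
        have h2 := congrArg π h
        rw [hbπ] at h2
        have h0 : π (Sum.inl (Sum.inl i)) = 0 := rfl
        omega
      · intro i j hij
        exact (hij : i ≠ j)
      · intro i
        apply hcross
        rw [hbπ]
        exact Nat.zero_ne_one
      · intro i; exact hmemS 0 hp _ rfl
      · exact hbS
    · obtain ⟨J₀, hJ₀ind, hJ₀cov⟩ := hcov 0
      obtain ⟨ep, hep, hepπ⟩ := hfull p hpr
      have hcast : ℓ - 2 + 1 = ℓ - 1 := by omega
      set u : Fin (ℓ - 2 + 1) → (Fin (ℓ - 1) ⊕ Fin m) ⊕ ((Fin (ℓ - 1) ⊕ Fin m) ⊕ Fin (m * (r - 2))) :=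
        fun i => Sum.inl (Sum.inl (Fin.cast hcast i)) with hu
      have huinj : Function.Injective u := by
        intro x y h
        simp only [hu, Sum.inl.injEq] at h
        exact Fin.cast_injective hcast h
      obtain ⟨e, heinj, heJ⟩ := avoid_one J₀ u (by
        intro i j hij hi hj
        exact hJ₀ind _ hi _ hj ((fun hc => hij (Fin.cast_injective hcast hc)) :
          (F₄ ℓ r m).Adj (u i) (u j)))
      have hle : ℓ / 2 ≤ ℓ - 2 := by omega
      refine bip_parts (F₄ ℓ r m) I π hcross (show p ≠ 0 by omega)
        (fun i => ep (Fin.castLE hm1 i)) (fun i => u (e (Fin.castLE hle i)))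
        (hep.comp (Fin.castLE_injective _))
        (huinj.comp (heinj.comp (Fin.castLE_injective _)))
        (fun i => hepπ _) (fun i => rfl)
        (fun i => hmemS p hp _ (hepπ _)) ?_
      intro i hmem
      obtain ⟨j, hj⟩ := Set.mem_iUnion.mp hmem
      exact heJ _ (hJ₀cov j _ hj rfl)


/-- **Proposition.** For `r ≥ 2`, `ℓ ≥ 3`, `m ≥ 2ℓ` and `F₁, F₂, F₃, F₄` as above: if `H` is
any `P_ℓ`-free graph and `n ≥ |H|`, then `H ⊗ T(n - |H|, r-1)` is `{F₁,F₂,F₃,F₄}`-free;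
indeed, after deleting any `r-1` independent sets from each `F_i`, the remaining graph still
contains a copy of `P_ℓ`. -/
theorem join_with_path_free_part_is_free (ℓ r m : ℕ) (hr : 2 ≤ r) (hℓ : 3 ≤ ℓ)
    (hm : 2 * ℓ ≤ m) :
    (∀ (α : Type) [Fintype α] (H : SimpleGraph α), ¬ ContainsCopy (pathGraph ℓ) H →
      ∀ n : ℕ, Fintype.card α ≤ n →
        ¬ ContainsCopy (F₁ ℓ r m) (gJoin H (turanGraph (n - Fintype.card α) (r - 1))) ∧
        ¬ ContainsCopy (F₂ r m) (gJoin H (turanGraph (n - Fintype.card α) (r - 1))) ∧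
        ¬ ContainsCopy (F₃ ℓ r m) (gJoin H (turanGraph (n - Fintype.card α) (r - 1))) ∧
        ¬ ContainsCopy (F₄ ℓ r m) (gJoin H (turanGraph (n - Fintype.card α) (r - 1)))) ∧
    DelIndepStillPath (F₁ ℓ r m) ℓ (r - 1) ∧
    DelIndepStillPath (F₂ r m) ℓ (r - 1) ∧
    DelIndepStillPath (F₃ ℓ r m) ℓ (r - 1) ∧
    DelIndepStillPath (F₄ ℓ r m) ℓ (r - 1) := by
  have d1 := del₁ ℓ r m hr hℓ hm
  have d2 := del₂ ℓ r m hr hℓ hm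
  have d3 := del₃ ℓ r m hr hℓ hm
  have d4 := del₄ ℓ r m hr hℓ hm
  have hk : 1 ≤ r - 1 := by omega
  refine ⟨?_, d1, d2, d3, d4⟩
  intro α _ H hH n hn
  exact ⟨free_of_del _ hk d1 H hH _, free_of_del _ hk d2 H hH _,
    free_of_del _ hk d3 H hH _, free_of_del _ hk d4 H hH _⟩
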